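/- arXiv:2604.14686 — 2 statements merged into one kernel-verified Lean document; each statement's English description precedes it below -/
import Mathlib

section
/- The graphs K₄ ∪ S₄ and K₂ ∪ K₂ ∪ S₄ are locally equienergetic: e(K₄ ∪ S₄) = e(K₂ ∪ K₂ ∪ S₄). -/
open SimpleGraph Matrix Finset

noncomputable section

/-- The adjacency matrix of a simple graph over `ℝ` is Hermitian. -/
lemma adjMatrix_isHermitian {V : Type*} [Fintype V] (G : SimpleGraph V)
    [DecidableRel G.Adj] : (G.adjMatrix ℝ).IsHermitian := by
  rw [Matrix.IsHermitian, Matrix.conjTranspose_eq_transpose_of_trivial]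
  exact G.isSymm_adjMatrix

/-- The energy of a finite simple graph: the sum of the absolute values of the
eigenvalues of its adjacency matrix. -/
def graphEnergy {V : Type*} [Fintype V] [DecidableEq V] (G : SimpleGraph V) : ℝ :=
  letI := Classical.decRel G.Adj
  ∑ i, |(adjMatrix_isHermitian G).eigenvalues i|

/-- The local energy of `G` at a vertex `v`: the energy of `G` minus the energy of the
induced subgraph obtained by deleting `v`. -/
def localEnergyAt {V : Type*} [Fintype V] [DecidableEq V] (G : SimpleGraph V) (v : V) : ℝ :=
  graphEnergy G - graphEnergy (G.induce {u | u ≠ v})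

/-- The local energy of `G`: the sum of the local energies at all vertices. -/
def localEnergy {V : Type*} [Fintype V] [DecidableEq V] (G : SimpleGraph V) : ℝ :=
  ∑ v, localEnergyAt G v

end

/-- The star graph on 4 vertices: vertex `0` is the center, adjacent to the 3 leaves. -/
def starGraph4 : SimpleGraph (Fin 4) :=
  SimpleGraph.fromRel fun a _ => a = 0

/- ### Auxiliary material -/

open Polynomial

section Spectral

variable {n : Type*} [Fintype n] [DecidableEq n]

lemma aux_charpoly_conj {R : Type*} [CommRing R]
    (U V D : Matrix n n R) (h1 : U * V = 1) (h2 : V * U = 1) :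
    (U * D * V).charpoly = D.charpoly := by
  unfold Matrix.charpoly
  have hUV : U.map (C : R → R[X]) * V.map C = 1 := by
    rw [← Matrix.map_mul, h1]; simp
  have hVU : V.map (C : R → R[X]) * U.map C = 1 := by
    rw [← Matrix.map_mul, h2]; simp
  have hcomm : U.map (C : R → R[X]) * (scalar n X) = (scalar n X) * U.map C :=
    (Matrix.scalar_commute X (fun r => Commute.all _ _) (U.map C)).symm
  have hcm : charmatrix (U * D * V) = (U.map C) * charmatrix D * (V.map C) := by
    unfold charmatrix
    have hm : (C : R →+* R[X]).mapMatrix (U * D * V)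
        = (U.map C) * ((C : R →+* R[X]).mapMatrix D) * (V.map C) := by
      simp [RingHom.mapMatrix_apply, Matrix.map_mul]
    rw [hm, Matrix.mul_sub, Matrix.sub_mul]
    congr 1
    rw [hcomm, mul_assoc, hUV, mul_one]
  rw [hcm, det_mul, det_mul, mul_comm, ← mul_assoc, ← det_mul, hVU]
  simp

lemma aux_charpoly_diag (d : n → ℝ) :
    (diagonal d).charpoly = ∏ i, (X - C (d i)) := by
  unfold Matrix.charpoly charmatrix
  have h1 : (scalar n) X - (C : ℝ →+* ℝ[X]).mapMatrix (diagonal d)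
      = diagonal (fun i => X - C (d i)) := by
    rw [RingHom.mapMatrix_apply, Matrix.diagonal_map (by simp), ← Matrix.diagonal_sub]
    congr
  rw [h1, det_diagonal]

lemma aux_charpoly_hermitian {A : Matrix n n ℝ} (hA : A.IsHermitian) :
    A.charpoly = ∏ i, (X - C (hA.eigenvalues i)) := by
  have h := hA.spectral_theorem
  have hD : diagonal (RCLike.ofReal ∘ hA.eigenvalues) = diagonal hA.eigenvalues := by rfl
  rw [hD] at h
  have hUU : (hA.eigenvectorUnitary : Matrix n n ℝ)
      * star (hA.eigenvectorUnitary : Matrix n n ℝ) = 1 :=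
    (Matrix.mem_unitaryGroup_iff).mp hA.eigenvectorUnitary.2
  have hUU' : star (hA.eigenvectorUnitary : Matrix n n ℝ)
      * (hA.eigenvectorUnitary : Matrix n n ℝ) = 1 :=
    (Matrix.mem_unitaryGroup_iff').mp hA.eigenvectorUnitary.2
  calc A.charpoly = ((hA.eigenvectorUnitary : Matrix n n ℝ) * diagonal hA.eigenvalues
        * star (hA.eigenvectorUnitary : Matrix n n ℝ)).charpoly := by conv_lhs => rw [h, Unitary.conjStarAlgAut_apply]
    _ = (diagonal hA.eigenvalues).charpoly := aux_charpoly_conj _ _ _ hUU hUU'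
    _ = ∏ i, (X - C (hA.eigenvalues i)) := aux_charpoly_diag _

lemma aux_sum_abs_eig {A : Matrix n n ℝ}
    (hA : A.IsHermitian) (m : Multiset ℝ)
    (h : A.charpoly = (m.map fun r => X - C r).prod) :
    ∑ i, |hA.eigenvalues i| = (m.map fun r => |r|).sum := by
  have h1 : ((univ.val.map hA.eigenvalues).map fun r => X - C r).prod
      = (m.map fun r => X - C r).prod := by
    rw [← h, aux_charpoly_hermitian hA, Finset.prod_eq_multiset_prod, Multiset.map_map]
    rfl
  have h2 : univ.val.map hA.eigenvalues = m := by
    have h3 := congrArg Polynomial.roots h1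
    rwa [Polynomial.roots_multiset_prod_X_sub_C, Polynomial.roots_multiset_prod_X_sub_C] at h3
  rw [Finset.sum_eq_multiset_sum, ← h2, Multiset.map_map]
  rfl

end Spectral

section EnergyLemmas

variable {V : Type*} [Fintype V] [DecidableEq V] {W : Type*} [Fintype W] [DecidableEq W]

lemma aux_graphEnergy_of_charpoly (G : SimpleGraph V)
    [inst : DecidableRel G.Adj] (m : Multiset ℝ)
    (h : (G.adjMatrix ℝ).charpoly = (m.map fun r => X - C r).prod) :
    graphEnergy G = (m.map fun r => |r|).sum := by
  unfold graphEnergy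
  have hadj : @SimpleGraph.adjMatrix ℝ V G (Classical.decRel G.Adj) _ _ = G.adjMatrix ℝ := by
    ext i j; by_cases hij : G.Adj i j <;> simp [hij]
  exact aux_sum_abs_eig _ m (by rw [hadj]; exact h)

lemma aux_charpoly_adj_iso {G : SimpleGraph V} {H : SimpleGraph W}
    [DecidableRel G.Adj] [DecidableRel H.Adj] (e : G ≃g H) :
    (G.adjMatrix ℝ).charpoly = (H.adjMatrix ℝ).charpoly := by
  have h : (H.adjMatrix ℝ) = Matrix.reindex e.toEquiv e.toEquiv (G.adjMatrix ℝ) := by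
    ext i j
    simp only [Matrix.reindex_apply, Matrix.submatrix_apply, SimpleGraph.adjMatrix_apply]
    congr 1
    rw [eq_iff_iff]
    conv_lhs => rw [← e.apply_symm_apply i, ← e.apply_symm_apply j]
    exact e.map_adj_iff
  rw [h, Matrix.charpoly_reindex]

lemma aux_graphEnergy_iso {G : SimpleGraph V} {H : SimpleGraph W} (e : G ≃g H) :
    graphEnergy G = graphEnergy H := by
  letI := Classical.decRel G.Adj
  letI := Classical.decRel H.Adj
  have hcp := aux_charpoly_adj_iso e
  set m : Multiset ℝ := univ.val.map (adjMatrix_isHermitian H).eigenvalues with hm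
  have hH : (H.adjMatrix ℝ).charpoly = (m.map fun r => X - C r).prod := by
    rw [aux_charpoly_hermitian (adjMatrix_isHermitian H), Finset.prod_eq_multiset_prod, hm,
      Multiset.map_map]
    rfl
  rw [aux_graphEnergy_of_charpoly G m (hcp.trans hH), aux_graphEnergy_of_charpoly H m hH]

instance decAdjSum (G : SimpleGraph V) (H : SimpleGraph W)
    [DecidableRel G.Adj] [DecidableRel H.Adj] : DecidableRel (G ⊕g H).Adj := fun a b =>
  match a, b with
  | .inl a, .inl b => decidable_of_iff (G.Adj a b) (by simp)
  | .inl _, .inr _ => decidable_of_iff False (by simp)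
  | .inr _, .inl _ => decidable_of_iff False (by simp)
  | .inr a, .inr b => decidable_of_iff (H.Adj a b) (by simp)

instance decAdjInduce {G : SimpleGraph V} [DecidableRel G.Adj] (s : Set V)
    [DecidablePred (· ∈ s)] : DecidableRel (G.induce s).Adj := fun a b =>
  decidable_of_iff (G.Adj ↑a ↑b) (by simp)

lemma aux_adj_sum_charpoly (G : SimpleGraph V) (H : SimpleGraph W)
    [DecidableRel G.Adj] [DecidableRel H.Adj] :
    ((G ⊕g H).adjMatrix ℝ).charpoly
      = (G.adjMatrix ℝ).charpoly * (H.adjMatrix ℝ).charpoly := by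
  have h : ((G ⊕g H).adjMatrix ℝ)
      = Matrix.fromBlocks (G.adjMatrix ℝ) 0 0 (H.adjMatrix ℝ) := by
    ext i j
    cases i <;> cases j <;> simp [SimpleGraph.sum_adj, Matrix.fromBlocks]
  rw [h, Matrix.charpoly_fromBlocks_zero₁₂]

lemma aux_charpoly_sum (G : SimpleGraph V) (H : SimpleGraph W)
    [DecidableRel G.Adj] [DecidableRel H.Adj] (m₁ m₂ : Multiset ℝ)
    (h₁ : (G.adjMatrix ℝ).charpoly = (m₁.map fun r => X - C r).prod)
    (h₂ : (H.adjMatrix ℝ).charpoly = (m₂.map fun r => X - C r).prod) :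
    ((G ⊕g H).adjMatrix ℝ).charpoly = ((m₁ + m₂).map fun r => X - C r).prod := by
  rw [aux_adj_sum_charpoly, h₁, h₂, Multiset.map_add, Multiset.prod_add]

end EnergyLemmas

section Isos

variable {V : Type*} [Fintype V] [DecidableEq V] {W : Type*} [Fintype W] [DecidableEq W]

def sumDelEquivLeft (V W : Type*) [DecidableEq V] (v : V) :
    {u : V ⊕ W // u ≠ Sum.inl v} ≃ ({x : V // x ≠ v} ⊕ W) where
  toFun u := match u with
    | ⟨Sum.inl x, h⟩ => Sum.inl ⟨x, fun hx => h (by rw [hx])⟩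
    | ⟨Sum.inr w, _⟩ => Sum.inr w
  invFun s := match s with
    | Sum.inl ⟨x, h⟩ => ⟨Sum.inl x, by simp [h]⟩
    | Sum.inr w => ⟨Sum.inr w, by simp⟩
  left_inv u := by rcases u with ⟨x | w, h⟩ <;> rfl
  right_inv s := by rcases s with ⟨x, h⟩ | w <;> rfl

def sumDelEquivRight (V W : Type*) [DecidableEq W] (w : W) :
    {u : V ⊕ W // u ≠ Sum.inr w} ≃ (V ⊕ {x : W // x ≠ w}) where
  toFun u := match u with
    | ⟨Sum.inl x, _⟩ => Sum.inl x
    | ⟨Sum.inr y, h⟩ => Sum.inr ⟨y, fun hy => h (by rw [hy])⟩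
  invFun s := match s with
    | Sum.inl x => ⟨Sum.inl x, by simp⟩
    | Sum.inr ⟨y, h⟩ => ⟨Sum.inr y, by simp [h]⟩
  left_inv u := by rcases u with ⟨x | w, h⟩ <;> rfl
  right_inv s := by rcases s with x | ⟨y, h⟩ <;> rfl

def isoInduceSumLeft (G : SimpleGraph V) (H : SimpleGraph W) (v : V) :
    ((G ⊕g H).induce {u | u ≠ Sum.inl v}) ≃g ((G.induce {x | x ≠ v}) ⊕g H) where
  toEquiv := sumDelEquivLeft V W v
  map_rel_iff' := by
    rintro ⟨(x | w), hx⟩ ⟨(y | z), hy⟩ <;>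
      simp [sumDelEquivLeft, SimpleGraph.comap, SimpleGraph.sum_adj]

def isoInduceSumRight (G : SimpleGraph V) (H : SimpleGraph W) (w : W) :
    ((G ⊕g H).induce {u | u ≠ Sum.inr w}) ≃g (G ⊕g (H.induce {x | x ≠ w})) where
  toEquiv := sumDelEquivRight V W w
  map_rel_iff' := by
    rintro ⟨(x | a), hx⟩ ⟨(y | b), hy⟩ <;>
      simp [sumDelEquivRight, SimpleGraph.comap, SimpleGraph.sum_adj]

def isoSumCongr {G : SimpleGraph V} {H : SimpleGraph W} {V' W' : Type*}
    {G' : SimpleGraph V'} {H' : SimpleGraph W'} (e₁ : G ≃g G') (e₂ : H ≃g H') :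
    (G ⊕g H) ≃g (G' ⊕g H') where
  toEquiv := Equiv.sumCongr e₁.toEquiv e₂.toEquiv
  map_rel_iff' := by
    rintro (a | a) (b | b) <;> simp [SimpleGraph.sum_adj, e₁.map_adj_iff, e₂.map_adj_iff]

def isoTopInduce {n m : ℕ} (s : Set (Fin n)) (e : s ≃ Fin m) :
    ((⊤ : SimpleGraph (Fin n)).induce s) ≃g (⊤ : SimpleGraph (Fin m)) where
  toEquiv := e
  map_rel_iff' := by
    intro a b
    simp only [SimpleGraph.comap_adj, SimpleGraph.top_adj, ne_eq, EmbeddingLike.apply_eq_iff_eq]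

def isoBot {G : SimpleGraph V} (h : ∀ a b, ¬ G.Adj a b) (e : V ≃ W) :
    G ≃g (⊥ : SimpleGraph W) where
  toEquiv := e
  map_rel_iff' := by intro a b; simp [h]

noncomputable def neEquiv {n : ℕ} (v : Fin (n+1)) : ↥{x : Fin (n+1) | x ≠ v} ≃ Fin n :=
  Fintype.equivFinOfCardEq (by simp [Fintype.card_subtype_compl, Finset.filter_ne'])

end Isos

section SmallGraphs

def starGraph3 : SimpleGraph (Fin 3) := SimpleGraph.fromRel fun a _ => a = 0

instance : DecidableRel starGraph4.Adj :=
  fun a b => decidable_of_iff _ (SimpleGraph.fromRel_adj _ a b).symm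
instance : DecidableRel starGraph3.Adj :=
  fun a b => decidable_of_iff _ (SimpleGraph.fromRel_adj _ a b).symm

set_option maxHeartbeats 1000000 in
lemma cp_top4 : (((⊤ : SimpleGraph (Fin 4))).adjMatrix ℝ).charpoly
    = (({3,-1,-1,-1} : Multiset ℝ).map fun r => X - C r).prod := by
  have hm : ((⊤ : SimpleGraph (Fin 4)).adjMatrix ℝ) = !![0,1,1,1;1,0,1,1;1,1,0,1;1,1,1,0] := by
    ext i j
    fin_cases i <;> fin_cases j <;>
      norm_num [SimpleGraph.adjMatrix_apply, Fin.ext_iff, Matrix.vecHead, Matrix.vecTail]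
  rw [hm, Matrix.charpoly]
  simp only [charmatrix_apply, Matrix.det_succ_row_zero, Fin.sum_univ_succ,
    Matrix.diagonal_apply, Matrix.submatrix_apply, Multiset.insert_eq_cons,
    Multiset.map_cons, Multiset.prod_cons, Multiset.map_singleton, Multiset.prod_singleton]
  norm_num [Fin.succAbove, Fin.ext_iff, Fin.lt_def, Matrix.vecHead, Matrix.vecTail,
    Function.comp, Fin.castSucc, Fin.castAdd, Fin.castLE]
  push_cast [_root_.map_neg, map_ofNat, Polynomial.C_0, Polynomial.C_1]
  ring

set_option maxHeartbeats 1000000 in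
lemma cp_top3 : (((⊤ : SimpleGraph (Fin 3))).adjMatrix ℝ).charpoly
    = (({2,-1,-1} : Multiset ℝ).map fun r => X - C r).prod := by
  have hm : ((⊤ : SimpleGraph (Fin 3)).adjMatrix ℝ) = !![0,1,1;1,0,1;1,1,0] := by
    ext i j
    fin_cases i <;> fin_cases j <;>
      norm_num [SimpleGraph.adjMatrix_apply, Fin.ext_iff, Matrix.vecHead, Matrix.vecTail]
  rw [hm, Matrix.charpoly]
  simp only [charmatrix_apply, Matrix.det_succ_row_zero, Fin.sum_univ_succ,
    Matrix.diagonal_apply, Matrix.submatrix_apply, Multiset.insert_eq_cons,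
    Multiset.map_cons, Multiset.prod_cons, Multiset.map_singleton, Multiset.prod_singleton]
  norm_num [Fin.succAbove, Fin.ext_iff, Fin.lt_def, Matrix.vecHead, Matrix.vecTail,
    Function.comp, Fin.castSucc, Fin.castAdd, Fin.castLE]
  push_cast [_root_.map_neg, map_ofNat, Polynomial.C_0, Polynomial.C_1]
  ring

set_option maxHeartbeats 1000000 in
lemma cp_top2 : (((⊤ : SimpleGraph (Fin 2))).adjMatrix ℝ).charpoly
    = (({1,-1} : Multiset ℝ).map fun r => X - C r).prod := by
  have hm : ((⊤ : SimpleGraph (Fin 2)).adjMatrix ℝ) = !![0,1;1,0] := by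
    ext i j
    fin_cases i <;> fin_cases j <;>
      norm_num [SimpleGraph.adjMatrix_apply, Fin.ext_iff, Matrix.vecHead, Matrix.vecTail]
  rw [hm, Matrix.charpoly]
  simp only [charmatrix_apply, Matrix.det_succ_row_zero, Fin.sum_univ_succ,
    Matrix.diagonal_apply, Matrix.submatrix_apply, Multiset.insert_eq_cons,
    Multiset.map_cons, Multiset.prod_cons, Multiset.map_singleton, Multiset.prod_singleton]
  norm_num [Fin.succAbove, Fin.ext_iff, Fin.lt_def, Matrix.vecHead, Matrix.vecTail,
    Function.comp, Fin.castSucc, Fin.castAdd, Fin.castLE]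
  push_cast [_root_.map_neg, map_ofNat, Polynomial.C_0, Polynomial.C_1]
  ring

set_option maxHeartbeats 1000000 in
lemma cp_top1 : (((⊤ : SimpleGraph (Fin 1))).adjMatrix ℝ).charpoly
    = (({0} : Multiset ℝ).map fun r => X - C r).prod := by
  have hm : ((⊤ : SimpleGraph (Fin 1)).adjMatrix ℝ) = !![0] := by
    ext i j
    fin_cases i <;> fin_cases j <;>
      norm_num [SimpleGraph.adjMatrix_apply, Fin.ext_iff, Matrix.vecHead, Matrix.vecTail]
  rw [hm, Matrix.charpoly]
  simp only [charmatrix_apply, Matrix.det_succ_row_zero, Fin.sum_univ_succ,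
    Matrix.diagonal_apply, Matrix.submatrix_apply, Multiset.insert_eq_cons,
    Multiset.map_cons, Multiset.prod_cons, Multiset.map_singleton, Multiset.prod_singleton]
  norm_num [Fin.succAbove, Fin.ext_iff, Fin.lt_def, Matrix.vecHead, Matrix.vecTail,
    Function.comp, Fin.castSucc, Fin.castAdd, Fin.castLE]

set_option maxHeartbeats 1000000 in
lemma cp_bot3 : (((⊥ : SimpleGraph (Fin 3))).adjMatrix ℝ).charpoly
    = (({0,0,0} : Multiset ℝ).map fun r => X - C r).prod := by
  have hm : ((⊥ : SimpleGraph (Fin 3)).adjMatrix ℝ) = !![0,0,0;0,0,0;0,0,0] := by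
    ext i j
    fin_cases i <;> fin_cases j <;>
      norm_num [SimpleGraph.adjMatrix_apply, Fin.ext_iff, Matrix.vecHead, Matrix.vecTail]
  rw [hm, Matrix.charpoly]
  simp only [charmatrix_apply, Matrix.det_succ_row_zero, Fin.sum_univ_succ,
    Matrix.diagonal_apply, Matrix.submatrix_apply, Multiset.insert_eq_cons,
    Multiset.map_cons, Multiset.prod_cons, Multiset.map_singleton, Multiset.prod_singleton]
  norm_num [Fin.succAbove, Fin.ext_iff, Fin.lt_def, Matrix.vecHead, Matrix.vecTail,
    Function.comp, Fin.castSucc, Fin.castAdd, Fin.castLE]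
  simp

set_option maxHeartbeats 1000000 in
lemma cp_star4 : (starGraph4.adjMatrix ℝ).charpoly
    = (({Real.sqrt 3, -Real.sqrt 3, 0, 0} : Multiset ℝ).map fun r => X - C r).prod := by
  have h3 : (C (Real.sqrt 3)) * (C (Real.sqrt 3)) = 3 := by
    rw [← C_mul, Real.mul_self_sqrt (by norm_num)]; exact map_ofNat C _
  have hm : (starGraph4.adjMatrix ℝ) = !![0,1,1,1;1,0,0,0;1,0,0,0;1,0,0,0] := by
    ext i j
    fin_cases i <;> fin_cases j <;>
      rfl
  rw [hm, Matrix.charpoly]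
  simp only [charmatrix_apply, Matrix.det_succ_row_zero, Fin.sum_univ_succ,
    Matrix.diagonal_apply, Matrix.submatrix_apply, Multiset.insert_eq_cons,
    Multiset.map_cons, Multiset.prod_cons, Multiset.map_singleton, Multiset.prod_singleton]
  norm_num [Fin.succAbove, Fin.ext_iff, Fin.lt_def, Matrix.vecHead, Matrix.vecTail,
    Function.comp, Fin.castSucc, Fin.castAdd, Fin.castLE]
  push_cast [_root_.map_neg, map_ofNat, Polynomial.C_0, Polynomial.C_1]
  linear_combination (X : ℝ[X])^2 * h3

set_option maxHeartbeats 1000000 in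
lemma cp_star3 : (starGraph3.adjMatrix ℝ).charpoly
    = (({Real.sqrt 2, -Real.sqrt 2, 0} : Multiset ℝ).map fun r => X - C r).prod := by
  have h2 : (C (Real.sqrt 2)) * (C (Real.sqrt 2)) = 2 := by
    rw [← C_mul, Real.mul_self_sqrt (by norm_num)]; exact map_ofNat C _
  have hm : (starGraph3.adjMatrix ℝ) = !![0,1,1;1,0,0;1,0,0] := by
    ext i j
    fin_cases i <;> fin_cases j <;>
      rfl
  rw [hm, Matrix.charpoly]
  simp only [charmatrix_apply, Matrix.det_succ_row_zero, Fin.sum_univ_succ,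
    Matrix.diagonal_apply, Matrix.submatrix_apply, Multiset.insert_eq_cons,
    Multiset.map_cons, Multiset.prod_cons, Multiset.map_singleton, Multiset.prod_singleton]
  norm_num [Fin.succAbove, Fin.ext_iff, Fin.lt_def, Matrix.vecHead, Matrix.vecTail,
    Function.comp, Fin.castSucc, Fin.castAdd, Fin.castLE]
  push_cast [_root_.map_neg, map_ofNat, Polynomial.C_0, Polynomial.C_1]
  linear_combination (X : ℝ[X]) * h2

/-- Deleting the center of the star leaves no edges. -/
lemma star4_del_center : ∀ a b, ¬ (starGraph4.induce {x | x ≠ (0 : Fin 4)}).Adj a b := by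
  decide

def isoStarDel (j : Fin 4) (e : ↥{x : Fin 4 | x ≠ j} ≃ Fin 3)
    (h : ∀ a b, starGraph3.Adj (e a) (e b) ↔ (starGraph4.induce {x | x ≠ j}).Adj a b) :
    (starGraph4.induce {x | x ≠ j}) ≃g starGraph3 :=
  ⟨e, h _ _⟩

noncomputable def eDel1 : ↥{x : Fin 4 | x ≠ 1} ≃ Fin 3 :=
  Equiv.ofBijective (fun x => ![0, 0, 1, 2] x.1) (by decide)
noncomputable def eDel2 : ↥{x : Fin 4 | x ≠ 2} ≃ Fin 3 :=
  Equiv.ofBijective (fun x => ![0, 1, 0, 2] x.1) (by decide)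
noncomputable def eDel3 : ↥{x : Fin 4 | x ≠ 3} ≃ Fin 3 :=
  Equiv.ofBijective (fun x => ![0, 1, 2, 0] x.1) (by decide)

noncomputable def isoStarDel1 : (starGraph4.induce {x | x ≠ (1 : Fin 4)}) ≃g starGraph3 :=
  isoStarDel 1 eDel1 (by decide)
noncomputable def isoStarDel2 : (starGraph4.induce {x | x ≠ (2 : Fin 4)}) ≃g starGraph3 :=
  isoStarDel 2 eDel2 (by decide)
noncomputable def isoStarDel3 : (starGraph4.induce {x | x ≠ (3 : Fin 4)}) ≃g starGraph3 :=
  isoStarDel 3 eDel3 (by decide)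

end SmallGraphs

set_option maxHeartbeats 2000000 in
/-- `e(K₄ ∪ S₄) = e(K₂ ∪ K₂ ∪ S₄)`. -/
theorem localEnergy_K4_S4 :
    localEnergy ((⊤ : SimpleGraph (Fin 4)) ⊕g starGraph4) =
      localEnergy (((⊤ : SimpleGraph (Fin 2)) ⊕g (⊤ : SimpleGraph (Fin 2)))
        ⊕g starGraph4) := by
  have habs3 : |Real.sqrt 3| = Real.sqrt 3 := abs_of_nonneg (Real.sqrt_nonneg _)
  have habs2 : |Real.sqrt 2| = Real.sqrt 2 := abs_of_nonneg (Real.sqrt_nonneg _)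
  -- energies of the relevant disjoint unions
  have eA : graphEnergy ((⊤ : SimpleGraph (Fin 4)) ⊕g starGraph4) = 6 + 2*Real.sqrt 3 := by
    rw [aux_graphEnergy_of_charpoly _ _ (aux_charpoly_sum _ _ _ _ cp_top4 cp_star4)]
    simp [Multiset.insert_eq_cons, habs3, abs_neg]
    norm_num
    ring
  have eB : graphEnergy ((⊤ : SimpleGraph (Fin 3)) ⊕g starGraph4) = 4 + 2*Real.sqrt 3 := by
    rw [aux_graphEnergy_of_charpoly _ _ (aux_charpoly_sum _ _ _ _ cp_top3 cp_star4)]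
    simp [Multiset.insert_eq_cons, habs3, abs_neg]
    norm_num
    ring
  have eC : graphEnergy ((⊤ : SimpleGraph (Fin 4)) ⊕g (⊥ : SimpleGraph (Fin 3))) = 6 := by
    rw [aux_graphEnergy_of_charpoly _ _ (aux_charpoly_sum _ _ _ _ cp_top4 cp_bot3)]
    simp [Multiset.insert_eq_cons, abs_neg]
    norm_num
  have eD : graphEnergy ((⊤ : SimpleGraph (Fin 4)) ⊕g starGraph3) = 6 + 2*Real.sqrt 2 := by
    rw [aux_graphEnergy_of_charpoly _ _ (aux_charpoly_sum _ _ _ _ cp_top4 cp_star3)]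
    simp [Multiset.insert_eq_cons, habs2, abs_neg]
    norm_num
    ring
  have cp22 := aux_charpoly_sum _ _ _ _ cp_top2 cp_top2
  have cp12 := aux_charpoly_sum _ _ _ _ cp_top1 cp_top2
  have cp21 := aux_charpoly_sum _ _ _ _ cp_top2 cp_top1
  have eE : graphEnergy (((⊤ : SimpleGraph (Fin 2)) ⊕g (⊤ : SimpleGraph (Fin 2)))
      ⊕g starGraph4) = 4 + 2*Real.sqrt 3 := by
    rw [aux_graphEnergy_of_charpoly _ _ (aux_charpoly_sum _ _ _ _ cp22 cp_star4)]
    simp [Multiset.insert_eq_cons, habs3, abs_neg]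
    norm_num
    ring
  have eF : graphEnergy (((⊤ : SimpleGraph (Fin 1)) ⊕g (⊤ : SimpleGraph (Fin 2)))
      ⊕g starGraph4) = 2 + 2*Real.sqrt 3 := by
    rw [aux_graphEnergy_of_charpoly _ _ (aux_charpoly_sum _ _ _ _ cp12 cp_star4)]
    simp [Multiset.insert_eq_cons, habs3, abs_neg]
    norm_num
    ring
  have eF' : graphEnergy (((⊤ : SimpleGraph (Fin 2)) ⊕g (⊤ : SimpleGraph (Fin 1)))
      ⊕g starGraph4) = 2 + 2*Real.sqrt 3 := by
    rw [aux_graphEnergy_of_charpoly _ _ (aux_charpoly_sum _ _ _ _ cp21 cp_star4)]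
    simp [Multiset.insert_eq_cons, habs3, abs_neg]
    norm_num
    ring
  have eGb : graphEnergy (((⊤ : SimpleGraph (Fin 2)) ⊕g (⊤ : SimpleGraph (Fin 2)))
      ⊕g (⊥ : SimpleGraph (Fin 3))) = 4 := by
    rw [aux_graphEnergy_of_charpoly _ _ (aux_charpoly_sum _ _ _ _ cp22 cp_bot3)]
    simp [Multiset.insert_eq_cons, abs_neg]
    norm_num
  have eH : graphEnergy (((⊤ : SimpleGraph (Fin 2)) ⊕g (⊤ : SimpleGraph (Fin 2)))
      ⊕g starGraph3) = 4 + 2*Real.sqrt 2 := by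
    rw [aux_graphEnergy_of_charpoly _ _ (aux_charpoly_sum _ _ _ _ cp22 cp_star3)]
    simp [Multiset.insert_eq_cons, habs2, abs_neg]
    norm_num
    ring
  -- vertex-deleted energies for K4 ⊕ S4
  have hL : ∀ i : Fin 4,
      graphEnergy (((⊤ : SimpleGraph (Fin 4)) ⊕g starGraph4).induce {u | u ≠ Sum.inl i})
        = 4 + 2*Real.sqrt 3 := fun i =>
    (aux_graphEnergy_iso ((isoInduceSumLeft _ _ i).trans
      (isoSumCongr (isoTopInduce _ (neEquiv i)) Iso.refl))).trans eB
  have hR0 : graphEnergy (((⊤ : SimpleGraph (Fin 4)) ⊕g starGraph4).induce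
      {u | u ≠ Sum.inr (0 : Fin 4)}) = 6 :=
    (aux_graphEnergy_iso ((isoInduceSumRight _ _ 0).trans
      (isoSumCongr Iso.refl (isoBot star4_del_center (neEquiv 0))))).trans eC
  have hR1 : graphEnergy (((⊤ : SimpleGraph (Fin 4)) ⊕g starGraph4).induce
      {u | u ≠ Sum.inr (1 : Fin 4)}) = 6 + 2*Real.sqrt 2 :=
    (aux_graphEnergy_iso ((isoInduceSumRight _ _ 1).trans
      (isoSumCongr Iso.refl isoStarDel1))).trans eD
  have hR2 : graphEnergy (((⊤ : SimpleGraph (Fin 4)) ⊕g starGraph4).induce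
      {u | u ≠ Sum.inr (2 : Fin 4)}) = 6 + 2*Real.sqrt 2 :=
    (aux_graphEnergy_iso ((isoInduceSumRight _ _ 2).trans
      (isoSumCongr Iso.refl isoStarDel2))).trans eD
  have hR3 : graphEnergy (((⊤ : SimpleGraph (Fin 4)) ⊕g starGraph4).induce
      {u | u ≠ Sum.inr (3 : Fin 4)}) = 6 + 2*Real.sqrt 2 :=
    (aux_graphEnergy_iso ((isoInduceSumRight _ _ 3).trans
      (isoSumCongr Iso.refl isoStarDel3))).trans eD
  -- vertex-deleted energies for K2 ⊕ K2 ⊕ S4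
  have hL2 : ∀ i : Fin 2,
      graphEnergy ((((⊤ : SimpleGraph (Fin 2)) ⊕g (⊤ : SimpleGraph (Fin 2))) ⊕g starGraph4).induce
        {u | u ≠ Sum.inl (Sum.inl i)}) = 2 + 2*Real.sqrt 3 := fun i =>
    (aux_graphEnergy_iso ((isoInduceSumLeft _ _ (Sum.inl i)).trans
      ((isoSumCongr (isoInduceSumLeft _ _ i) Iso.refl).trans
        (isoSumCongr (isoSumCongr (isoTopInduce _ (neEquiv i)) Iso.refl) Iso.refl)))).trans eF
  have hL2' : ∀ i : Fin 2,
      graphEnergy ((((⊤ : SimpleGraph (Fin 2)) ⊕g (⊤ : SimpleGraph (Fin 2))) ⊕g starGraph4).induce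
        {u | u ≠ Sum.inl (Sum.inr i)}) = 2 + 2*Real.sqrt 3 := fun i =>
    (aux_graphEnergy_iso ((isoInduceSumLeft _ _ (Sum.inr i)).trans
      ((isoSumCongr (isoInduceSumRight _ _ i) Iso.refl).trans
        (isoSumCongr (isoSumCongr Iso.refl (isoTopInduce _ (neEquiv i))) Iso.refl)))).trans eF'
  have hR0' : graphEnergy ((((⊤ : SimpleGraph (Fin 2)) ⊕g (⊤ : SimpleGraph (Fin 2)))
      ⊕g starGraph4).induce {u | u ≠ Sum.inr (0 : Fin 4)}) = 4 :=
    (aux_graphEnergy_iso ((isoInduceSumRight _ _ 0).trans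
      (isoSumCongr Iso.refl (isoBot star4_del_center (neEquiv 0))))).trans eGb
  have hR1' : graphEnergy ((((⊤ : SimpleGraph (Fin 2)) ⊕g (⊤ : SimpleGraph (Fin 2)))
      ⊕g starGraph4).induce {u | u ≠ Sum.inr (1 : Fin 4)}) = 4 + 2*Real.sqrt 2 :=
    (aux_graphEnergy_iso ((isoInduceSumRight _ _ 1).trans
      (isoSumCongr Iso.refl isoStarDel1))).trans eH
  have hR2' : graphEnergy ((((⊤ : SimpleGraph (Fin 2)) ⊕g (⊤ : SimpleGraph (Fin 2)))
      ⊕g starGraph4).induce {u | u ≠ Sum.inr (2 : Fin 4)}) = 4 + 2*Real.sqrt 2 :=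
    (aux_graphEnergy_iso ((isoInduceSumRight _ _ 2).trans
      (isoSumCongr Iso.refl isoStarDel2))).trans eH
  have hR3' : graphEnergy ((((⊤ : SimpleGraph (Fin 2)) ⊕g (⊤ : SimpleGraph (Fin 2)))
      ⊕g starGraph4).induce {u | u ≠ Sum.inr (3 : Fin 4)}) = 4 + 2*Real.sqrt 2 :=
    (aux_graphEnergy_iso ((isoInduceSumRight _ _ 3).trans
      (isoSumCongr Iso.refl isoStarDel3))).trans eH
  have E1 : localEnergy ((⊤ : SimpleGraph (Fin 4)) ⊕g starGraph4)
      = 8*(6+2*Real.sqrt 3) - (4*(4+2*Real.sqrt 3) + 6 + 3*(6+2*Real.sqrt 2)) := by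
    rw [localEnergy, Fintype.sum_sum_type]
    simp only [localEnergyAt]
    rw [Fin.sum_univ_four, Fin.sum_univ_four]
    rw [eA, hL 0, hL 1, hL 2, hL 3, hR0, hR1, hR2, hR3]
    ring
  have E2 : localEnergy (((⊤ : SimpleGraph (Fin 2)) ⊕g (⊤ : SimpleGraph (Fin 2))) ⊕g starGraph4)
      = 8*(4+2*Real.sqrt 3) - (2*(2+2*Real.sqrt 3) + 2*(2+2*Real.sqrt 3)
          + 4 + 3*(4+2*Real.sqrt 2)) := by
    rw [localEnergy, Fintype.sum_sum_type, Fintype.sum_sum_type]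
    simp only [localEnergyAt]
    rw [Fin.sum_univ_two, Fin.sum_univ_two, Fin.sum_univ_four]
    rw [eE, hL2 0, hL2 1, hL2' 0, hL2' 1, hR0', hR1', hR2', hR3']
    ring
  rw [E1, E2]
  ring
end

section
/- The graphs K₄ ∪ P₄ and K₂ ∪ K₂ ∪ P₄ are locally equienergetic: e(K₄ ∪ P₄) = e(K₂ ∪ K₂ ∪ P₄). -/
open SimpleGraph Matrix Finset

noncomputable section AuxEnergy

open Polynomial

def absRoots (p : ℝ[X]) : ℝ := (p.roots.map (fun x => |x|)).sum

lemma absRoots_multiset (m : Multiset ℝ) :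
    absRoots ((m.map (fun a => X - C a)).prod) = (m.map (fun x => |x|)).sum := by
  rw [absRoots, Polynomial.roots_multiset_prod_X_sub_C]

lemma absRoots_mul {p q : ℝ[X]} (hp : p.Monic) (hq : q.Monic) :
    absRoots (p * q) = absRoots p + absRoots q := by
  rw [absRoots, Polynomial.roots_mul (hp.mul hq).ne_zero, Multiset.map_add, Multiset.sum_add]
  rfl

lemma charpoly_diagonal {n : Type*} [Fintype n] [DecidableEq n] (d : n → ℝ) :
    (Matrix.diagonal d).charpoly = ∏ i, (X - C (d i)) := by
  have h : charmatrix (Matrix.diagonal d) = Matrix.diagonal (fun i => X - C (d i)) := by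
    ext i j
    by_cases hij : i = j
    · subst hij; simp [charmatrix_apply_eq]
    · simp [charmatrix_apply_ne _ _ _ hij, Matrix.diagonal_apply_ne _ hij]
  rw [Matrix.charpoly, h, Matrix.det_diagonal]

lemma charpoly_conj_unitary {n : Type*} [Fintype n] [DecidableEq n] (V D : Matrix n n ℝ)
    (h1 : V * star V = 1) :
    (V * D * star V).charpoly = D.charpoly := by
  have hc : charmatrix (V * D * star V)
      = (V.map C) * charmatrix D * ((star V).map C) := by
    have e1 : V.map ⇑C * Matrix.scalar n (X : ℝ[X]) * (star V).map ⇑C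
        = Matrix.scalar n (X : ℝ[X]) := by
      rw [← (Matrix.scalar_commute (X : ℝ[X]) (fun r' => Commute.all _ _) (V.map ⇑C)).eq,
        Matrix.mul_assoc, ← Matrix.map_mul, h1, Matrix.map_one _ (map_zero C) (map_one C),
        Matrix.mul_one]
    unfold charmatrix
    rw [Matrix.mul_sub, Matrix.sub_mul, RingHom.mapMatrix_apply, RingHom.mapMatrix_apply, e1,
      Matrix.map_mul, Matrix.map_mul]
  rw [Matrix.charpoly, Matrix.charpoly, hc, Matrix.det_mul, Matrix.det_mul]
  rw [mul_comm ((V.map C).det * (charmatrix D).det), ← mul_assoc, mul_comm (((star V).map C).det),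
    ← Matrix.det_mul, ← Matrix.map_mul, h1, Matrix.map_one _ (map_zero C) (map_one C),
    Matrix.det_one, one_mul]

lemma hermitian_charpoly {n : Type*} [Fintype n] [DecidableEq n] {A : Matrix n n ℝ}
    (hA : A.IsHermitian) : A.charpoly = ∏ i, (X - C (hA.eigenvalues i)) := by
  have h1 : (hA.eigenvectorUnitary : Matrix n n ℝ) * star (hA.eigenvectorUnitary : Matrix n n ℝ)
      = 1 := by
    simpa using (Matrix.mem_unitaryGroup_iff).mp hA.eigenvectorUnitary.2
  have h2 : A.charpoly = (Matrix.diagonal (RCLike.ofReal ∘ hA.eigenvalues)).charpoly := by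
    conv_lhs => rw [hA.spectral_theorem]
    exact charpoly_conj_unitary _ _ h1
  rw [h2]
  have h3 : (RCLike.ofReal ∘ hA.eigenvalues : n → ℝ) = hA.eigenvalues := by
    funext i; simp
  rw [h3, _root_.charpoly_diagonal]

lemma sum_abs_eigenvalues_eq {n : Type*} [Fintype n] [DecidableEq n] {A : Matrix n n ℝ}
    (hA : A.IsHermitian) : ∑ i, |hA.eigenvalues i| = absRoots A.charpoly := by
  rw [hermitian_charpoly hA]
  have h : (∏ i, (X - C (hA.eigenvalues i)))
      = ((Finset.univ.val.map hA.eigenvalues).map (fun a => X - C a)).prod := by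
    rw [Multiset.map_map]; rfl
  rw [h, absRoots_multiset, Multiset.map_map]
  rfl

lemma adjMatrix_instance_eq {V : Type*} [Fintype V] (G : SimpleGraph V)
    (i1 i2 : DecidableRel G.Adj) :
    @SimpleGraph.adjMatrix ℝ V G i1 _ _ = @SimpleGraph.adjMatrix ℝ V G i2 _ _ := by
  congr!

lemma graphEnergy_eq_absRoots {V : Type*} [Fintype V] [DecidableEq V] (G : SimpleGraph V)
    [inst : DecidableRel G.Adj] :
    graphEnergy G = absRoots (G.adjMatrix ℝ).charpoly := by
  unfold graphEnergy
  rw [sum_abs_eigenvalues_eq]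
  congr 2
  exact adjMatrix_instance_eq G _ _

variable {α β : Type*}

lemma graphEnergy_iso {V W : Type*} [Fintype V] [DecidableEq V] [Fintype W] [DecidableEq W]
    {G : SimpleGraph V} {H : SimpleGraph W} (e : G ≃g H) : graphEnergy G = graphEnergy H := by
  classical
  rw [graphEnergy_eq_absRoots, graphEnergy_eq_absRoots]
  congr 1
  have hm : H.adjMatrix ℝ = Matrix.reindex e.toEquiv e.toEquiv (G.adjMatrix ℝ) := by
    ext i j
    simp only [Matrix.reindex_apply, Matrix.submatrix_apply, SimpleGraph.adjMatrix_apply,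
      Equiv.symm_apply_apply]
    by_cases h : H.Adj i j
    · rw [if_pos h]; exact (if_pos (e.symm.map_adj_iff.mpr h)).symm
    · rw [if_neg h]; exact (if_neg (fun hc => h (e.symm.map_adj_iff.mp hc))).symm
  rw [hm, Matrix.charpoly_reindex]

lemma adjMatrix_sum (G : SimpleGraph α) (H : SimpleGraph β)
    [Fintype α] [Fintype β]
    [DecidableRel G.Adj] [DecidableRel H.Adj] [DecidableRel (G ⊕g H).Adj] :
    (G ⊕g H).adjMatrix ℝ = Matrix.fromBlocks (G.adjMatrix ℝ) 0 0 (H.adjMatrix ℝ) := by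
  ext i j
  cases i <;> cases j <;>
    simp [Matrix.fromBlocks, SimpleGraph.adjMatrix_apply]

lemma graphEnergy_sum [Fintype α] [DecidableEq α] [Fintype β] [DecidableEq β]
    (G : SimpleGraph α) (H : SimpleGraph β) :
    graphEnergy (G ⊕g H) = graphEnergy G + graphEnergy H := by
  classical
  rw [graphEnergy_eq_absRoots, graphEnergy_eq_absRoots, graphEnergy_eq_absRoots,
    adjMatrix_sum G H, Matrix.charpoly_fromBlocks_zero₁₂,
    absRoots_mul (Matrix.charpoly_monic _) (Matrix.charpoly_monic _)]

def isoInduceSumInl (G : SimpleGraph α) (H : SimpleGraph β) (v : α) :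
    ((G ⊕g H).induce {u | u ≠ Sum.inl v}) ≃g ((G.induce {u | u ≠ v}) ⊕g H) :=
  ⟨⟨fun x => match x with
    | ⟨Sum.inl a, h⟩ => Sum.inl ⟨a, by simpa using h⟩
    | ⟨Sum.inr b, _⟩ => Sum.inr b,
    fun x => match x with
    | Sum.inl ⟨a, h⟩ => ⟨Sum.inl a, by simpa using h⟩
    | Sum.inr b => ⟨Sum.inr b, by simp⟩,
    by rintro ⟨(a|b), h⟩ <;> rfl,
    by rintro (⟨a,h⟩|b) <;> rfl⟩, by
    rintro ⟨(a|b), ha⟩ ⟨(c|d), hc⟩ <;> simp⟩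

def isoInduceSumInr (G : SimpleGraph α) (H : SimpleGraph β) (v : β) :
    ((G ⊕g H).induce {u | u ≠ Sum.inr v}) ≃g (G ⊕g (H.induce {u | u ≠ v})) :=
  ⟨⟨fun x => match x with
    | ⟨Sum.inl a, _⟩ => Sum.inl a
    | ⟨Sum.inr b, h⟩ => Sum.inr ⟨b, by simpa using h⟩,
    fun x => match x with
    | Sum.inl a => ⟨Sum.inl a, by simp⟩
    | Sum.inr ⟨b, h⟩ => ⟨Sum.inr b, by simpa using h⟩,
    by rintro ⟨(a|b), h⟩ <;> rfl,
    by rintro (a|⟨b,h⟩) <;> rfl⟩, by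
    rintro ⟨(a|b), ha⟩ ⟨(c|d), hc⟩ <;> simp⟩

lemma induce_top' {V : Type*} (s : Set V) : (⊤ : SimpleGraph V).induce s = ⊤ := by
  ext a b
  simp [Subtype.coe_injective.ne_iff]

lemma card_ne {V : Type*} [Fintype V] [DecidableEq V] (v : V) {n : ℕ}
    (h : Fintype.card V = n + 1) :
    Fintype.card ({u : V | u ≠ v} : Set V) = n := by
  calc Fintype.card ({u : V | u ≠ v} : Set V)
      = Fintype.card {u : V // ¬ u = v} := Fintype.card_congr (Equiv.refl _)
    _ = Fintype.card V - Fintype.card {u : V // u = v} := Fintype.card_subtype_compl _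
    _ = n := by rw [Fintype.card_subtype_eq, h]; simp

lemma energy_top_induce {V : Type*} [Fintype V] [DecidableEq V] (v : V) {n : ℕ}
    (h : Fintype.card V = n + 1) :
    graphEnergy ((⊤ : SimpleGraph V).induce {u | u ≠ v})
      = graphEnergy (⊤ : SimpleGraph (Fin n)) := by
  rw [induce_top']
  exact graphEnergy_iso (Iso.completeGraph (Fintype.equivFinOfCardEq (card_ne v h)))

lemma charm_top (n : ℕ) : charmatrix ((⊤ : SimpleGraph (Fin n)).adjMatrix ℝ)
    = Matrix.of (fun i j => if i = j then (X : ℝ[X]) else -1) := by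
  ext i j
  by_cases h : i = j
  · subst h; simp [charmatrix_apply_eq]
  · simp [charmatrix_apply_ne _ _ _ h, h]

lemma energy_top_fin1 : graphEnergy (⊤ : SimpleGraph (Fin 1)) = 0 := by
  rw [graphEnergy_eq_absRoots]
  have h : ((⊤ : SimpleGraph (Fin 1)).adjMatrix ℝ).charpoly
      = ((({0} : Multiset ℝ)).map (fun a => X - C a)).prod := by
    rw [Matrix.charpoly, charm_top]
    simp [Matrix.det_fin_one]
  rw [h, absRoots_multiset]
  simp

lemma energy_top_fin2 : graphEnergy (⊤ : SimpleGraph (Fin 2)) = 2 := by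
  rw [graphEnergy_eq_absRoots]
  have h : ((⊤ : SimpleGraph (Fin 2)).adjMatrix ℝ).charpoly
      = ((({1, -1} : Multiset ℝ)).map (fun a => X - C a)).prod := by
    rw [Matrix.charpoly, charm_top]
    simp [Matrix.det_fin_two]
    ring
  rw [h, absRoots_multiset]
  simp
  norm_num

lemma energy_top_fin3 : graphEnergy (⊤ : SimpleGraph (Fin 3)) = 4 := by
  rw [graphEnergy_eq_absRoots]
  have h : ((⊤ : SimpleGraph (Fin 3)).adjMatrix ℝ).charpoly
      = ((({2, -1, -1} : Multiset ℝ)).map (fun a => X - C a)).prod := by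
    rw [Matrix.charpoly, charm_top]
    simp [Matrix.det_fin_three, map_ofNat]
    ring
  rw [h, absRoots_multiset]
  simp
  norm_num

lemma energy_top_fin4 : graphEnergy (⊤ : SimpleGraph (Fin 4)) = 6 := by
  rw [graphEnergy_eq_absRoots]
  have h : ((⊤ : SimpleGraph (Fin 4)).adjMatrix ℝ).charpoly
      = ((({3, -1, -1, -1} : Multiset ℝ)).map (fun a => X - C a)).prod := by
    rw [Matrix.charpoly, charm_top]
    simp +decide [Matrix.det_succ_row_zero, Fin.sum_univ_succ, Matrix.det_fin_three,
      Matrix.submatrix_apply, map_ofNat]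
    ring
  rw [h, absRoots_multiset]
  simp
  norm_num

end AuxEnergy

/-- `e(K₄ ∪ P₄) = e(K₂ ∪ K₂ ∪ P₄)`. -/
theorem localEnergy_K4_P4 :
    localEnergy ((⊤ : SimpleGraph (Fin 4)) ⊕g pathGraph 4) =
      localEnergy (((⊤ : SimpleGraph (Fin 2)) ⊕g (⊤ : SimpleGraph (Fin 2)))
        ⊕g pathGraph 4) := by
  classical
  have hG1 : graphEnergy ((⊤ : SimpleGraph (Fin 4)) ⊕g pathGraph 4)
      = 6 + graphEnergy (pathGraph 4) := by
    rw [graphEnergy_sum, energy_top_fin4]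
  have hK22 : graphEnergy ((⊤ : SimpleGraph (Fin 2)) ⊕g (⊤ : SimpleGraph (Fin 2))) = 4 := by
    rw [graphEnergy_sum, energy_top_fin2]; norm_num
  have hG2 : graphEnergy (((⊤ : SimpleGraph (Fin 2)) ⊕g (⊤ : SimpleGraph (Fin 2)))
      ⊕g pathGraph 4) = 4 + graphEnergy (pathGraph 4) := by
    rw [graphEnergy_sum, hK22]
  have h1 : ∀ v : Fin 4,
      graphEnergy (((⊤ : SimpleGraph (Fin 4)) ⊕g pathGraph 4).induce {u | u ≠ Sum.inl v})
        = 4 + graphEnergy (pathGraph 4) := by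
    intro v
    rw [graphEnergy_iso (isoInduceSumInl _ _ v), graphEnergy_sum,
      energy_top_induce (n := 3) v (by simp), energy_top_fin3]
  have h2 : ∀ v : Fin 4,
      graphEnergy (((⊤ : SimpleGraph (Fin 4)) ⊕g pathGraph 4).induce {u | u ≠ Sum.inr v})
        = 6 + graphEnergy ((pathGraph 4).induce {u | u ≠ v}) := by
    intro v
    rw [graphEnergy_iso (isoInduceSumInr _ _ v), graphEnergy_sum, energy_top_fin4]
  have h3l : ∀ x : Fin 2,
      graphEnergy ((((⊤ : SimpleGraph (Fin 2)) ⊕g (⊤ : SimpleGraph (Fin 2))) ⊕g pathGraph 4).induce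
        {u | u ≠ Sum.inl (Sum.inl x)}) = 2 + graphEnergy (pathGraph 4) := by
    intro x
    rw [graphEnergy_iso (isoInduceSumInl _ _ (Sum.inl x)), graphEnergy_sum,
      graphEnergy_iso (isoInduceSumInl _ _ x), graphEnergy_sum,
      energy_top_induce (n := 1) x (by simp), energy_top_fin1, energy_top_fin2]
    ring
  have h3r : ∀ x : Fin 2,
      graphEnergy ((((⊤ : SimpleGraph (Fin 2)) ⊕g (⊤ : SimpleGraph (Fin 2))) ⊕g pathGraph 4).induce
        {u | u ≠ Sum.inl (Sum.inr x)}) = 2 + graphEnergy (pathGraph 4) := by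
    intro x
    rw [graphEnergy_iso (isoInduceSumInl _ _ (Sum.inr x)), graphEnergy_sum,
      graphEnergy_iso (isoInduceSumInr _ _ x), graphEnergy_sum,
      energy_top_induce (n := 1) x (by simp), energy_top_fin1, energy_top_fin2]
    ring
  have h4 : ∀ v : Fin 4,
      graphEnergy ((((⊤ : SimpleGraph (Fin 2)) ⊕g (⊤ : SimpleGraph (Fin 2))) ⊕g pathGraph 4).induce
        {u | u ≠ Sum.inr v}) = 4 + graphEnergy ((pathGraph 4).induce {u | u ≠ v}) := by
    intro v
    rw [graphEnergy_iso (isoInduceSumInr _ _ v), graphEnergy_sum, hK22]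
  simp only [localEnergy, localEnergyAt]
  rw [Fintype.sum_sum_type, Fintype.sum_sum_type, Fintype.sum_sum_type]
  simp only [hG1, hG2, h1, h2, h3l, h3r, h4]
  simp [Finset.sum_sub_distrib, Finset.sum_const, Finset.card_univ]
  ring
end
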